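/- Fix a probability space (Ω, F, ℙ) and a step size Δt with 0 < Δt < 0.5. Let (ΔB_k)_{k≥0} be independent real Gaussian random variables, each with mean 0 and variance Δt, and define the real-valued Euler–Maruyama sequence for the SDE dx = ((−3x − x³)/(1+t))dt + (1+t)^{−3}dB by Y_0 ∈ ℝ (deterministic, arbitrary) and Y_{k+1} = Y_k + ((−3Y_k − Y_k³)/(1 + kΔt))Δt + (1 + kΔt)^{−3}ΔB_k. Then E|Y_k| → ∞ as k → ∞. -/

import Mathlib

open MeasureTheory ProbabilityTheory Filter Real Set
open scoped NNReal ENNReal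

lemma aux_two_mul_le_two_pow (m : ℕ) : 2 * m ≤ 2 ^ m := by
  induction m with
  | zero => simp
  | succ m ih =>
    rcases Nat.eq_zero_or_pos m with h | h
    · subst h; norm_num
    · have h1 : (1:ℕ) ≤ 2 ^ m := Nat.one_le_two_pow
      have : 2 ≤ 2 ^ m := by
        calc 2 = 2 * 1 := by ring
        _ ≤ 2 * m := by omega
        _ ≤ 2 ^ m := ih
      calc 2 * (m + 1) = 2 * m + 2 := by ring
      _ ≤ 2 ^ m + 2 ^ m := by omega
      _ = 2 ^ (m + 1) := by ring

lemma aux_mul_two_pow_le {x : ℝ} (hx : 2 ≤ x) (m : ℕ) : x * 2 ^ m ≤ x ^ (2 ^ m) := by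
  induction m with
  | zero => simp
  | succ m ih =>
    have hx0 : (0:ℝ) ≤ x := by linarith
    have h1 : (1:ℝ) ≤ 2 ^ m := one_le_pow₀ (by norm_num)
    have hnn : (0:ℝ) ≤ x * 2 ^ m := by positivity
    have hsq : (x * 2 ^ m) ^ 2 ≤ (x ^ (2 ^ m)) ^ 2 := by
      exact pow_le_pow_left₀ hnn ih 2
    have heq : (x ^ (2 ^ m)) ^ 2 = x ^ (2 ^ (m + 1)) := by
      rw [← pow_mul]; ring_nf
    calc x * 2 ^ (m + 1) = 2 * (x * 2 ^ m) := by ring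
      _ ≤ (x * 2 ^ m) ^ 2 := by
          have h2 : (2:ℝ) ≤ x * 2 ^ m := by nlinarith
          calc 2 * (x * 2 ^ m) ≤ (x * 2 ^ m) * (x * 2 ^ m) :=
                mul_le_mul_of_nonneg_right h2 hnn
            _ = (x * 2 ^ m) ^ 2 := (sq (x * 2 ^ m)).symm
      _ ≤ (x ^ (2 ^ m)) ^ 2 := hsq
      _ = x ^ (2 ^ (m + 1)) := heq

lemma aux_pow_add_le {a b : ℝ} (ha : 0 ≤ a) (hb : 0 ≤ b) (n : ℕ) :
    (a + b) ^ n ≤ 2 ^ n * (a ^ n + b ^ n) := by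
  have h1 : a + b ≤ 2 * max a b := by
    rcases le_total a b with h | h
    · simp [max_eq_right h]; linarith
    · simp [max_eq_left h]; linarith
  have hm : 0 ≤ max a b := le_max_of_le_left ha
  calc (a + b) ^ n ≤ (2 * max a b) ^ n := pow_le_pow_left₀ (by linarith) h1 n
    _ = 2 ^ n * (max a b) ^ n := mul_pow 2 _ n
    _ ≤ 2 ^ n * (a ^ n + b ^ n) := by
        apply mul_le_mul_of_nonneg_left _ (by positivity)
        rcases le_total a b with h | h
        · rw [max_eq_right h]; nlinarith [pow_nonneg ha n]
        · rw [max_eq_left h]; nlinarith [pow_nonneg hb n]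

lemma aux_integrable_abs_pow_mul_exp {b : ℝ} (hb : 0 < b) (n : ℕ) :
    Integrable (fun x : ℝ => |x| ^ n * Real.exp (-b * x ^ 2)) := by
  have h2n : Integrable (fun x : ℝ => x ^ (2 * n) * Real.exp (-b * x ^ 2)) := by
    have := integrable_rpow_mul_exp_neg_mul_sq hb
      (s := ((2 * n : ℕ) : ℝ)) (lt_of_lt_of_le (by norm_num) (Nat.cast_nonneg _))
    simpa only [Real.rpow_natCast] using this
  have h0 : Integrable (fun x : ℝ => Real.exp (-b * x ^ 2)) := integrable_exp_neg_mul_sq hb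
  refine (h2n.add h0).mono' ?_ (ae_of_all _ fun x => ?_)
  · exact ((measurable_abs.pow_const n).mul
      ((measurable_id.pow_const 2).const_mul (-b)).exp).aestronglyMeasurable
  · have hxe : 0 < Real.exp (-b * x ^ 2) := Real.exp_pos _
    have h1 : |x| ^ n ≤ x ^ (2 * n) + 1 := by
      have hx2 : x ^ (2 * n) = |x| ^ (2 * n) := by
        rw [pow_mul, pow_mul, sq_abs]
      rw [hx2]
      rcases le_total (|x|) 1 with h | h
      · have : |x| ^ n ≤ 1 := pow_le_one₀ (abs_nonneg x) h
        have : (0:ℝ) ≤ |x| ^ (2 * n) := by positivity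
        linarith
      · have : |x| ^ n ≤ |x| ^ (2 * n) := pow_le_pow_right₀ h (by omega)
        linarith
    have hnorm : ‖|x| ^ n * Real.exp (-b * x ^ 2)‖ = |x| ^ n * Real.exp (-b * x ^ 2) := by
      rw [Real.norm_eq_abs, abs_mul, abs_of_nonneg (by positivity : (0:ℝ) ≤ |x| ^ n),
        abs_of_pos hxe]
    rw [hnorm]
    calc |x| ^ n * Real.exp (-b * x ^ 2)
        ≤ (x ^ (2 * n) + 1) * Real.exp (-b * x ^ 2) :=
          mul_le_mul_of_nonneg_right h1 hxe.le
      _ = x ^ (2 * n) * Real.exp (-b * x ^ 2) + Real.exp (-b * x ^ 2) := by ring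

lemma aux_gaussian_abs_pow_integrable {v : ℝ≥0} (hv : v ≠ 0) (n : ℕ) :
    Integrable (fun x : ℝ => |x| ^ n) (gaussianReal 0 v) := by
  have hv0 : (0:ℝ) < v := by exact_mod_cast pos_iff_ne_zero.mpr hv
  rw [gaussianReal_of_var_ne_zero 0 hv,
    integrable_withDensity_iff (measurable_gaussianPDF 0 v)
      (ae_of_all _ fun x => ENNReal.ofReal_lt_top)]
  have hpdf : ∀ x : ℝ, (gaussianPDF 0 v x).toReal = gaussianPDFReal 0 v x := fun x =>
    ENNReal.toReal_ofReal (gaussianPDFReal_nonneg 0 v x)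
  have hb : (0:ℝ) < (2 * (v:ℝ))⁻¹ := by positivity
  have heq : (fun x : ℝ => |x| ^ n * (gaussianPDF 0 v x).toReal)
      = fun x : ℝ => (Real.sqrt (2 * π * v))⁻¹ * (|x| ^ n * Real.exp (-(2 * (v:ℝ))⁻¹ * x ^ 2)) := by
    funext x
    rw [hpdf, gaussianPDFReal]
    have harg : -(x - 0) ^ 2 / (2 * (v:ℝ)) = -(2 * (v:ℝ))⁻¹ * x ^ 2 := by
      field_simp
      ring
    rw [harg]; ring
  rw [heq]
  exact (aux_integrable_abs_pow_mul_exp hb n).const_mul _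

lemma aux_gaussian_pos {v : ℝ≥0} (hv : v ≠ 0) {s : Set ℝ} (hs : MeasurableSet s)
    (hvol : volume s ≠ 0) : gaussianReal 0 v s ≠ 0 := by
  rw [gaussianReal_of_var_ne_zero 0 hv,
    Ne, withDensity_apply_eq_zero (measurable_gaussianPDF 0 v)]
  have : {x : ℝ | gaussianPDF 0 v x ≠ 0} = Set.univ := by
    ext x; simp [(gaussianPDF_pos 0 hv x).ne']
  rw [this, Set.univ_inter]
  exact hvol

set_option maxHeartbeats 2000000 in

/-- Lemma 3.3: the Euler–Maruyama approximation of
`dx = ((-3x - x³)/(1+t)) dt + (1+t)⁻³ dB` blows up in mean for any step size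
`Δt ∈ (0, 0.5)` and any initial value. -/
theorem em_counterexample_blowup {Ω : Type*} [MeasurableSpace Ω]
    (P : Measure Ω) [IsProbabilityMeasure P]
    (Δt : ℝ) (hΔt0 : 0 < Δt) (hΔt : Δt < 0.5)
    (ΔB : ℕ → Ω → ℝ) (hΔB_meas : ∀ k, Measurable (ΔB k))
    (hΔB_indep : iIndepFun ΔB P)
    (hΔB_law : ∀ k, P.map (ΔB k) = gaussianReal 0 ⟨Δt, hΔt0.le⟩)
    (Y : ℕ → Ω → ℝ) (hY_meas : ∀ k, Measurable (Y k))
    (Y0 : ℝ) (hY0 : ∀ ω, Y 0 ω = Y0)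
    (hstep : ∀ (k : ℕ) (ω : Ω), Y (k + 1) ω =
      Y k ω + (-3 * Y k ω - (Y k ω) ^ 3) / (1 + (k : ℝ) * Δt) * Δt +
        ((1 + (k : ℝ) * Δt) ^ 3)⁻¹ * ΔB k ω) :
    Tendsto (fun k : ℕ => ∫ ω, |Y k ω| ∂P) atTop atTop := by
  have hΔthalf : Δt < 1 / 2 := by norm_num at hΔt; linarith
  have hV : (⟨Δt, hΔt0.le⟩ : ℝ≥0) ≠ 0 := by
    intro h
    exact hΔt0.ne' (congrArg NNReal.toReal h)
  -- Step 1: integrability of all powers of `Y k`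
  have hInt : ∀ k n, Integrable (fun ω => |Y k ω| ^ n) P := by
    intro k
    induction k with
    | zero =>
      intro n
      have h : (fun ω => |Y 0 ω| ^ n) = fun _ => |Y0| ^ n := by
        funext ω; rw [hY0]
      rw [h]; exact integrable_const _
    | succ k ih =>
      intro n
      have hBint : Integrable (fun ω => |ΔB k ω| ^ n) P := by
        have h1 : Integrable (fun x : ℝ => |x| ^ n) (P.map (ΔB k)) := by
          rw [hΔB_law k]; exact aux_gaussian_abs_pow_integrable hV n
        exact (integrable_map_measure
          (measurable_abs.pow_const n).aestronglyMeasurable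
          (hΔB_meas k).aemeasurable).mp h1
      have hsum : Integrable (fun ω => (|Y k ω| + 1) ^ (3 * n)) P := by
        simp_rw [add_pow, one_pow, mul_one]
        apply integrable_finset_sum
        intro m _
        exact (ih m).mul_const _
      have hg : Integrable
          (fun ω => 2 ^ n * ((1 + 4 * Δt) ^ n * (|Y k ω| + 1) ^ (3 * n) + |ΔB k ω| ^ n)) P :=
        ((hsum.const_mul ((1 + 4 * Δt) ^ n)).add hBint).const_mul _
      refine hg.mono' ((hY_meas (k + 1)).abs.pow_const n).aestronglyMeasurable
        (ae_of_all _ fun ω => ?_)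
      have hD1 : (1 : ℝ) ≤ 1 + (k : ℝ) * Δt := by
        have : (0 : ℝ) ≤ (k : ℝ) * Δt := by positivity
        linarith
      have hD0 : (0 : ℝ) < 1 + (k : ℝ) * Δt := by linarith
      have h1 : |Y (k + 1) ω| ≤ (1 + 4 * Δt) * (|Y k ω| + 1) ^ 3 + |ΔB k ω| := by
        rw [hstep k ω]
        set x := Y k ω with hx
        set d := ΔB k ω with hd
        set D := 1 + (k : ℝ) * Δt with hD
        have t1 : |x + (-3 * x - x ^ 3) / D * Δt + (D ^ 3)⁻¹ * d|
            ≤ |x| + |(-3 * x - x ^ 3) / D * Δt| + |(D ^ 3)⁻¹ * d| :=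
          (abs_add_le _ _).trans (add_le_add (abs_add_le _ _) le_rfl)
        have hnum : |(-3 * x - x ^ 3)| ≤ 3 * |x| + |x| ^ 3 := by
          have h := abs_sub (-3 * x) (x ^ 3)
          rw [abs_mul, abs_pow] at h
          simpa using h
        have t2 : |(-3 * x - x ^ 3) / D * Δt| ≤ (3 * |x| + |x| ^ 3) * Δt := by
          rw [abs_mul, abs_div, abs_of_pos hΔt0, abs_of_pos hD0]
          have hdiv : |(-3 * x - x ^ 3)| / D ≤ |(-3 * x - x ^ 3)| :=
            div_le_self (abs_nonneg _) hD1
          exact mul_le_mul_of_nonneg_right (hdiv.trans hnum) hΔt0.le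
        have t3 : |(D ^ 3)⁻¹ * d| ≤ |d| := by
          rw [abs_mul, abs_of_nonneg (by positivity : (0:ℝ) ≤ (D ^ 3)⁻¹)]
          have hle : (D ^ 3)⁻¹ ≤ 1 := inv_le_one_of_one_le₀ (one_le_pow₀ hD1)
          nlinarith [abs_nonneg d]
        have t4 : |x| + (3 * |x| + |x| ^ 3) * Δt ≤ (1 + 4 * Δt) * (|x| + 1) ^ 3 := by
          have hu : 0 ≤ |x| := abs_nonneg x
          nlinarith [hu, hΔt0.le, pow_nonneg hu 2, pow_nonneg hu 3,
            mul_nonneg hΔt0.le (pow_nonneg hu 2)]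
        linarith
      have h0 : (0:ℝ) ≤ (1 + 4 * Δt) * (|Y k ω| + 1) ^ 3 := by positivity
      calc ‖|Y (k + 1) ω| ^ n‖ = |Y (k + 1) ω| ^ n := by
            rw [Real.norm_eq_abs, abs_of_nonneg (by positivity)]
        _ ≤ ((1 + 4 * Δt) * (|Y k ω| + 1) ^ 3 + |ΔB k ω|) ^ n :=
            pow_le_pow_left₀ (abs_nonneg _) h1 n
        _ ≤ 2 ^ n * (((1 + 4 * Δt) * (|Y k ω| + 1) ^ 3) ^ n + |ΔB k ω| ^ n) :=
            aux_pow_add_le h0 (abs_nonneg _) n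
        _ = 2 ^ n * ((1 + 4 * Δt) ^ n * (|Y k ω| + 1) ^ (3 * n) + |ΔB k ω| ^ n) := by
            rw [mul_pow, ← pow_mul]
  have hInt1 : ∀ k, Integrable (fun ω => |Y k ω|) P := fun k => by
    simpa using hInt k 1
  -- Step 2: constants
  set qq : ℝ := ((gaussianReal 0 ⟨Δt, hΔt0.le⟩) (Icc (-1 : ℝ) 1)).toReal with hqq_def
  have hq_pos : 0 < qq := by
    refine ENNReal.toReal_pos ?_ (by
      have h := (instIsProbabilityMeasureGaussianReal 0 ⟨Δt, hΔt0.le⟩).measure_univ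
      exact ne_top_of_le_ne_top (by rw [h]; exact ENNReal.one_ne_top)
        (measure_mono (Set.subset_univ _)))
    refine aux_gaussian_pos hV measurableSet_Icc ?_
    rw [Real.volume_Icc]
    simp only [ne_eq, ENNReal.ofReal_eq_zero, not_le]
    norm_num
  set C : ℝ := Y0 + (-3 * Y0 - Y0 ^ 3) * Δt with hC_def
  set r : ℝ := max (6 / Δt) (2 / qq) with hr_def
  have h6Δt : (2 : ℝ) ≤ 6 / Δt := by
    rw [le_div_iff₀ hΔt0]; linarith
  have hr6 : 6 / Δt ≤ r := le_max_left _ _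
  have hr2q : 2 / qq ≤ r := le_max_right _ _
  have hr2 : (2 : ℝ) ≤ r := h6Δt.trans hr6
  have hr1 : (1 : ℝ) ≤ r := by linarith
  have hr0 : (0 : ℝ) ≤ r := by linarith
  set s : ℝ := r + |C| with hs_def
  set pp : ℝ := ((gaussianReal 0 ⟨Δt, hΔt0.le⟩) (Ici s)).toReal with hpp_def
  have hp_pos : 0 < pp := by
    refine ENNReal.toReal_pos ?_ (by
      have h := (instIsProbabilityMeasureGaussianReal 0 ⟨Δt, hΔt0.le⟩).measure_univ
      exact ne_top_of_le_ne_top (by rw [h]; exact ENNReal.one_ne_top)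
        (measure_mono (Set.subset_univ _)))
    refine aux_gaussian_pos hV measurableSet_Ici ?_
    simp [Real.volume_Ici]
  -- Step 3: pointwise lower bound on the blow-up event
  have key : ∀ (ω : Ω), s ≤ ΔB 0 ω → ∀ m : ℕ,
      (∀ i, 1 ≤ i → i ≤ m → |ΔB i ω| ≤ 1) → r ^ (2 ^ m) ≤ |Y (m + 1) ω| := by
    intro ω h0 m
    induction m with
    | zero =>
      intro _
      have h1 : Y 1 ω = C + ΔB 0 ω := by
        rw [hstep 0 ω, hY0 ω, hC_def]
        norm_num
      have h3 : |ΔB 0 ω| ≤ |C + ΔB 0 ω| + |C| := by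
        calc |ΔB 0 ω| = |(C + ΔB 0 ω) - C| := by ring_nf
          _ ≤ |C + ΔB 0 ω| + |C| := abs_sub _ _
      have h4 : s ≤ |ΔB 0 ω| := h0.trans (le_abs_self _)
      rw [h1]
      simp only [pow_zero, pow_one]
      rw [hs_def] at h4
      linarith
    | succ m ih =>
      intro hbound
      have ha : r ^ (2 ^ m) ≤ |Y (m + 1) ω| :=
        ih (fun i hi1 him => hbound i hi1 (by omega))
      have hDb : |ΔB (m + 1) ω| ≤ 1 := hbound (m + 1) (by omega) le_rfl
      rw [hstep (m + 1) ω]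
      set yy := Y (m + 1) ω with hyy
      set D : ℝ := 1 + ((m + 1 : ℕ) : ℝ) * Δt with hD_def
      have hD1 : (1 : ℝ) ≤ D := by
        have : (0 : ℝ) ≤ ((m + 1 : ℕ) : ℝ) * Δt := by positivity
        rw [hD_def]; linarith
      have hD0 : (0 : ℝ) < D := by linarith
      set a : ℝ := |yy| with ha_def
      have ha0 : (0 : ℝ) ≤ a := abs_nonneg _
      -- chain of inequalities giving `3 * D ≤ a * Δt`
      have hchain : 3 * D ≤ a * Δt := by
        have h2j : (1 : ℝ) + ((m + 1 : ℕ) : ℝ) ≤ 2 ^ (m + 1) := by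
          have := one_add_mul_le_pow (by norm_num : (-2 : ℝ) ≤ 1) (m + 1)
          simpa [one_add_one_eq_two] using this
        have hjle : ((m + 1 : ℕ) : ℝ) * Δt ≤ ((m + 1 : ℕ) : ℝ) := by
          have h1 : (0 : ℝ) ≤ ((m + 1 : ℕ) : ℝ) := Nat.cast_nonneg _
          nlinarith
        have e1 : 3 * D ≤ 6 * 2 ^ m := by
          have h2 : (2 : ℝ) ^ (m + 1) = 2 * 2 ^ m := by ring
          rw [hD_def]
          nlinarith [h2j, hjle]
        have e2 : (6 : ℝ) * 2 ^ m = (6 / Δt) * 2 ^ m * Δt := by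
          field_simp
        have e3 : (6 / Δt) * 2 ^ m ≤ (6 / Δt) ^ (2 ^ m) := aux_mul_two_pow_le h6Δt m
        have e4 : (6 / Δt) ^ (2 ^ m) ≤ r ^ (2 ^ m) :=
          pow_le_pow_left₀ (by linarith) hr6 _
        have e5 : r ^ (2 ^ m) ≤ a := ha
        calc 3 * D ≤ 6 * 2 ^ m := e1
          _ = (6 / Δt) * 2 ^ m * Δt := e2
          _ ≤ a * Δt := by
              apply mul_le_mul_of_nonneg_right _ hΔt0.le
              linarith
      have har : r ≤ a := by
        have : r = r ^ 1 := (pow_one r).symm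
        calc r ≤ r ^ (2 ^ m) := le_self_pow₀ hr1 (Nat.pos_iff_ne_zero.mp (Nat.two_pow_pos m))
          _ ≤ a := ha
      have ha2 : (2 : ℝ) ≤ a := hr2.trans har
      -- split drift and noise
      have hsplit : yy + (-3 * yy - yy ^ 3) / D * Δt
          = yy * (1 - (3 + yy ^ 2) * (Δt / D)) := by
        field_simp [hD0.ne']
        ring
      have hD3 : (0 : ℝ) < D ^ 3 := pow_pos hD0 3
      have hnoise : |(D ^ 3)⁻¹ * ΔB (m + 1) ω| ≤ 1 := by
        rw [abs_mul, abs_of_nonneg (inv_nonneg.mpr hD3.le)]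
        have hle : (D ^ 3)⁻¹ ≤ 1 := inv_le_one_of_one_le₀ (one_le_pow₀ hD1)
        nlinarith [abs_nonneg (ΔB (m + 1) ω)]
      have htri : |yy * (1 - (3 + yy ^ 2) * (Δt / D))| - 1
          ≤ |yy + (-3 * yy - yy ^ 3) / D * Δt + (D ^ 3)⁻¹ * ΔB (m + 1) ω| := by
        rw [hsplit]
        have := abs_sub (yy * (1 - (3 + yy ^ 2) * (Δt / D)) + (D ^ 3)⁻¹ * ΔB (m + 1) ω)
          ((D ^ 3)⁻¹ * ΔB (m + 1) ω)
        simp only [add_sub_cancel_right] at this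
        linarith
      have habs : a * ((3 + a ^ 2) * (Δt / D) - 1)
          ≤ |yy * (1 - (3 + yy ^ 2) * (Δt / D))| := by
        rw [abs_mul, ← ha_def]
        have hy2 : yy ^ 2 = a ^ 2 := (sq_abs yy).symm
        have h1 : (3 + a ^ 2) * (Δt / D) - 1 ≤ |1 - (3 + yy ^ 2) * (Δt / D)| := by
          rw [hy2]
          calc (3 + a ^ 2) * (Δt / D) - 1 = -(1 - (3 + a ^ 2) * (Δt / D)) := by ring
            _ ≤ |1 - (3 + a ^ 2) * (Δt / D)| := neg_le_abs _
        exact mul_le_mul_of_nonneg_left h1 ha0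
      -- the final arithmetic step
      have h3t : (3 : ℝ) ≤ a * (Δt / D) := by
        have he : a * (Δt / D) = a * Δt / D := by ring
        rw [he, le_div_iff₀ hD0]
        linarith
      have ht0 : (0 : ℝ) < Δt / D := div_pos hΔt0 hD0
      have hKey : r ^ (2 ^ (m + 1)) ≤ a * ((3 + a ^ 2) * (Δt / D) - 1) - 1 := by
        have hRsq : r ^ (2 ^ (m + 1)) = (r ^ (2 ^ m)) ^ 2 := by
          have he : 2 ^ (m + 1) = 2 ^ m * 2 := pow_succ 2 m
          rw [he, pow_mul]
        have haR : (r ^ (2 ^ m)) ^ 2 ≤ a ^ 2 :=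
          pow_le_pow_left₀ (pow_nonneg hr0 _) ha 2
        have hcube : 3 * a ^ 2 ≤ a ^ 2 * (a * (Δt / D)) := by
          nlinarith [sq_nonneg a]
        rw [hRsq]
        nlinarith [h3t, ha2, ht0.le, hcube]
      linarith
  -- Step 4: the blow-up event and its probability
  set S : ℕ → Set ℝ := fun j => if j = 0 then Ici s else Icc (-1 : ℝ) 1 with hS_def
  have hS0 : S 0 = Ici s := if_pos rfl
  have hSsucc : ∀ i : ℕ, S (i + 1) = Icc (-1 : ℝ) 1 := fun i => if_neg (Nat.succ_ne_zero i)
  have hS_meas : ∀ j, MeasurableSet (S j) := by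
    intro j
    rcases j with _ | i
    · rw [hS0]; exact measurableSet_Ici
    · rw [hSsucc]; exact measurableSet_Icc
  have hPE : ∀ j, P (ΔB j ⁻¹' S j) = (gaussianReal 0 ⟨Δt, hΔt0.le⟩) (S j) := by
    intro j
    rw [← hΔB_law j, Measure.map_apply (hΔB_meas j) (hS_meas j)]
  have hPA : ∀ m : ℕ, P (⋂ j ∈ Finset.range (m + 1), ΔB j ⁻¹' S j)
      = (gaussianReal 0 ⟨Δt, hΔt0.le⟩) (Icc (-1 : ℝ) 1) ^ m
        * (gaussianReal 0 ⟨Δt, hΔt0.le⟩) (Ici s) := by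
    intro m
    rw [hΔB_indep.meas_biInter (fun j _ => ⟨S j, hS_meas j, rfl⟩)]
    rw [Finset.prod_range_succ']
    simp only [hPE]
    simp only [hSsucc, hS0]
    rw [Finset.prod_const, Finset.card_range]
  -- Step 5: lower bound on the mean
  have hlow : ∀ m : ℕ, pp * 2 ^ m ≤ ∫ ω, |Y (m + 1) ω| ∂P := by
    intro m
    set A : Set Ω := ⋂ j ∈ Finset.range (m + 1), ΔB j ⁻¹' S j with hA_def
    have hA_meas : MeasurableSet A := by
      refine MeasurableSet.iInter fun j => MeasurableSet.iInter fun _ => ?_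
      exact (hS_meas j).preimage (hΔB_meas j)
    have hbound : ∀ ω ∈ A, r ^ (2 ^ m) ≤ |Y (m + 1) ω| := by
      intro ω hω
      rw [hA_def, Set.mem_iInter] at hω
      have h0 : s ≤ ΔB 0 ω := by
        have h := hω 0
        rw [Set.mem_iInter] at h
        have h' := h (Finset.mem_range.mpr (Nat.succ_pos m))
        rw [Set.mem_preimage, hS0] at h'
        exact h'
      refine key ω h0 m (fun i hi1 him => ?_)
      have h := hω i
      rw [Set.mem_iInter] at h
      have h' := h (Finset.mem_range.mpr (by omega))
      obtain ⟨i', rfl⟩ : ∃ i', i = i' + 1 := ⟨i - 1, by omega⟩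
      rw [Set.mem_preimage, hSsucc] at h'
      rw [abs_le]
      exact ⟨h'.1, h'.2⟩
    have h1 : r ^ (2 ^ m) * (P A).toReal ≤ ∫ ω in A, |Y (m + 1) ω| ∂P :=
      setIntegral_ge_of_const_le_real hA_meas (measure_ne_top P A) hbound
        ((hInt1 (m + 1)).integrableOn)
    have h2 : ∫ ω in A, |Y (m + 1) ω| ∂P ≤ ∫ ω, |Y (m + 1) ω| ∂P :=
      setIntegral_le_integral (hInt1 (m + 1)) (ae_of_all _ fun ω => abs_nonneg _)
    have h3 : (P A).toReal = qq ^ m * pp := by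
      rw [hA_def, hPA m, ENNReal.toReal_mul, ENNReal.toReal_pow, hqq_def, hpp_def]
    have hrq : (2 : ℝ) ≤ r ^ 2 * qq := by
      have h5 : (2 : ℝ) ≤ r * qq := by
        have := mul_le_mul_of_nonneg_right hr2q hq_pos.le
        rwa [div_mul_cancel₀ _ hq_pos.ne'] at this
      nlinarith [hq_pos.le]
    have h4 : pp * 2 ^ m ≤ r ^ (2 ^ m) * (qq ^ m * pp) := by
      have e1 : (2 : ℝ) ^ m ≤ (r ^ 2 * qq) ^ m := pow_le_pow_left₀ (by norm_num) hrq m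
      have e2 : (r ^ 2 * qq) ^ m = r ^ (2 * m) * qq ^ m := by
        rw [mul_pow, ← pow_mul]
      have e3 : r ^ (2 * m) ≤ r ^ (2 ^ m) :=
        pow_le_pow_right₀ hr1 (aux_two_mul_le_two_pow m)
      have e4 : (2 : ℝ) ^ m ≤ r ^ (2 ^ m) * qq ^ m := by
        have hqm : (0 : ℝ) ≤ qq ^ m := pow_nonneg hq_pos.le m
        calc (2 : ℝ) ^ m ≤ (r ^ 2 * qq) ^ m := e1
          _ = r ^ (2 * m) * qq ^ m := e2
          _ ≤ r ^ (2 ^ m) * qq ^ m := mul_le_mul_of_nonneg_right e3 hqm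
      calc pp * 2 ^ m ≤ pp * (r ^ (2 ^ m) * qq ^ m) :=
            mul_le_mul_of_nonneg_left e4 hp_pos.le
        _ = r ^ (2 ^ m) * (qq ^ m * pp) := by ring
    rw [h3] at h1
    linarith
  -- Step 6: conclude
  have htend : Tendsto (fun m : ℕ => pp * 2 ^ m) atTop atTop :=
    (tendsto_pow_atTop_atTop_of_one_lt (by norm_num : (1 : ℝ) < 2)).const_mul_atTop hp_pos
  have htend2 : Tendsto (fun k : ℕ => pp * 2 ^ (k - 1)) atTop atTop :=
    htend.comp (tendsto_sub_atTop_nat 1)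
  refine tendsto_atTop_mono' atTop ?_ htend2
  filter_upwards [eventually_ge_atTop 1] with k hk
  obtain ⟨m, rfl⟩ : ∃ m, k = m + 1 := ⟨k - 1, by omega⟩
  simpa using hlow m
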